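/- arXiv:1707.05747 — 4 statements merged into one kernel-verified Lean document; each statement's English description precedes it below -/
import Mathlib

section
/- Suppose assumptions (A2) and (A4) hold. If (λ*, c*) is a globally optimal solution of the augmented dual problem max{Θ(λ,c) : λ ∈ Λ, c > 0} with Θ(λ,c) = inf_{x∈A} L(x,λ,c), and the zero duality gap property inf_{x∈Ω} f(x) = sup{Θ(λ,c) : λ ∈ Λ, c > 0} holds, then for every globally optimal solution x* of the cone constrained problem, the pair (x*, λ*) is a global saddle point of L(x,λ,c) with least exact penalty parameter c*(x*,λ*) ≤ c*. -/
theorem stmt5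
    {X Y : Type*} [NormedAddCommGroup X] [NormedSpace ℝ X] [FiniteDimensional ℝ X]
    [NormedAddCommGroup Y] [NormedSpace ℝ Y]
    (A : Set X) (hAne : A.Nonempty)
    (K : Set Y) (hKne : K.Nonempty) (hKcl : IsClosed K) (hKconv : Convex ℝ K)
    (hKcone : ∀ t : ℝ, 0 ≤ t → ∀ y ∈ K, t • y ∈ K)
    (Λ : Set (Y →L[ℝ] ℝ)) (hΛcl : IsClosed Λ) (hΛconv : Convex ℝ Λ)
    (hΛcone : ∀ t : ℝ, 0 ≤ t → ∀ l ∈ Λ, t • l ∈ Λ)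
    (f : X → EReal) (G : X → Y) (Φ : Y → (Y →L[ℝ] ℝ) → ℝ → EReal)
    (L : X → (Y →L[ℝ] ℝ) → ℝ → EReal)
    (hL : ∀ x l c, L x l c = f x + Φ (G x) l c)
    (hA2 : ∀ y ∈ K, ∀ l ∈ Λ, ∀ c : ℝ, 0 < c → Φ y l c ≤ 0)
    (hA4 : ∀ y l, ∀ c₁ c₂ : ℝ, 0 < c₁ → c₁ ≤ c₂ → Φ y l c₁ ≤ Φ y l c₂)
    (hfeas : ∃ x ∈ A, G x ∈ K ∧ f x < ⊤)
    (Theta : (Y →L[ℝ] ℝ) → ℝ → EReal)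
    (hTheta : ∀ l c, Theta l c = ⨅ x ∈ A, L x l c)
    (ls : Y →L[ℝ] ℝ) (hls : ls ∈ Λ) (cstar : ℝ) (hcstar : 0 < cstar)
    (hdualopt : ∀ l ∈ Λ, ∀ c : ℝ, 0 < c → Theta l c ≤ Theta ls cstar)
    (hgap : (⨅ x ∈ {z ∈ A | G z ∈ K}, f x) = ⨆ l ∈ Λ, ⨆ c ∈ Set.Ioi (0:ℝ), Theta l c)
    (xs : X) (hxs : xs ∈ A) (hxsfeas : G xs ∈ K)
    (hxsopt : ∀ z ∈ A, G z ∈ K → f xs ≤ f z) :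
    (∃ c₀ > (0:ℝ), ∀ c ≥ c₀, L xs ls c < ⊤ ∧
      (∀ l ∈ Λ, L xs l c ≤ L xs ls c) ∧ (∀ x ∈ A, L xs ls c ≤ L x ls c)) ∧
    sInf {c₀ : ℝ | 0 < c₀ ∧ ∀ c ≥ c₀, L xs ls c < ⊤ ∧
      (∀ l ∈ Λ, L xs l c ≤ L xs ls c) ∧ (∀ x ∈ A, L xs ls c ≤ L x ls c)} ≤ cstar := by
  -- f xs ≤ Theta ls cstar
  have hfxsΘ : f xs ≤ Theta ls cstar := by
    have h1 : f xs ≤ ⨅ x ∈ {z ∈ A | G z ∈ K}, f x :=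
      le_iInf₂ fun z hz => hxsopt z hz.1 hz.2
    rw [hgap] at h1
    refine h1.trans ?_
    refine iSup₂_le fun l hl => iSup₂_le fun c hc => hdualopt l hl c hc
  have hmono : ∀ x l (c : ℝ), cstar ≤ c → L x l cstar ≤ L x l c := by
    intro x l c hc
    rw [hL, hL]
    exact add_le_add (le_refl _) (hA4 (G x) l cstar c hcstar hc)
  have hkey : ∀ x ∈ A, ∀ c : ℝ, cstar ≤ c → f xs ≤ L x ls c := by
    intro x hx c hc
    refine hfxsΘ.trans (le_trans ?_ (hmono x ls c hc))
    rw [hTheta]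
    exact iInf₂_le x hx
  have hupper : ∀ l ∈ Λ, ∀ c : ℝ, 0 < c → L xs l c ≤ f xs := by
    intro l hl c hc
    rw [hL]
    calc f xs + Φ (G xs) l c ≤ f xs + 0 :=
          add_le_add (le_refl _) (hA2 (G xs) hxsfeas l hl c hc)
      _ = f xs := add_zero _
  have hftop : f xs < ⊤ := by
    obtain ⟨x0, hx0A, hx0K, hx0⟩ := hfeas
    exact lt_of_le_of_lt (hxsopt x0 hx0A hx0K) hx0
  have hmain : ∀ c ≥ cstar, L xs ls c < ⊤ ∧
      (∀ l ∈ Λ, L xs l c ≤ L xs ls c) ∧ (∀ x ∈ A, L xs ls c ≤ L x ls c) := by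
    intro c hc
    have hc0 : 0 < c := hcstar.trans_le hc
    refine ⟨(hupper ls hls c hc0).trans_lt hftop, ?_, ?_⟩
    · intro l hl
      exact (hupper l hl c hc0).trans (hkey xs hxs c hc)
    · intro x hx
      exact (hupper ls hls c hc0).trans (hkey x hx c hc)
  refine ⟨⟨cstar, hcstar, hmain⟩, ?_⟩
  exact csInf_le ⟨0, fun c hc => hc.1.le⟩ ⟨hcstar, hmain⟩
end

section
/- Let assumptions (A4) and (A7) hold, and suppose L(·,λ*,c₀) is bounded below on A for some λ* ∈ Λ and c₀ > 0. Then the set S(λ*,c₁) = {x ∈ A : L(x,λ*,c₁) < f*} is bounded for some c₁ > 0 if and only if there exist c₂ > 0 and α > 0 such that the set Q(λ*,c₂,α) = {x ∈ A : L(x,λ*,c₂) < f*, dist(G(x),K) < α} is bounded. -/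
theorem stmt11
    {X Y : Type*} [NormedAddCommGroup X] [NormedSpace ℝ X] [FiniteDimensional ℝ X]
    [NormedAddCommGroup Y] [NormedSpace ℝ Y]
    (A : Set X) (hAne : A.Nonempty)
    (K : Set Y) (hKne : K.Nonempty) (hKcl : IsClosed K) (hKconv : Convex ℝ K)
    (hKcone : ∀ t : ℝ, 0 ≤ t → ∀ y ∈ K, t • y ∈ K)
    (Λ : Set (Y →L[ℝ] ℝ)) (hΛcl : IsClosed Λ) (hΛconv : Convex ℝ Λ)
    (hΛcone : ∀ t : ℝ, 0 ≤ t → ∀ l ∈ Λ, t • l ∈ Λ)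
    (f : X → EReal) (G : X → Y) (Φ : Y → (Y →L[ℝ] ℝ) → ℝ → EReal)
    (L : X → (Y →L[ℝ] ℝ) → ℝ → EReal)
    (hL : ∀ x l c, L x l c = f x + Φ (G x) l c)
    (hA4 : ∀ y l, ∀ c₁ c₂ : ℝ, 0 < c₁ → c₁ ≤ c₂ → Φ y l c₁ ≤ Φ y l c₂)
    (hA7 : ∀ l ∈ Λ, ∀ c₀ : ℝ, 0 < c₀ → ∀ r > (0:ℝ), ∀ M : ℝ, ∃ C : ℝ, ∀ c ≥ C,
      ∀ y : Y, r ≤ Metric.infDist y K → Φ y l c₀ < ⊤ → (M : EReal) ≤ Φ y l c - Φ y l c₀)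
    (hfeas : ∃ x ∈ A, G x ∈ K ∧ f x < ⊤)
    (ls : Y →L[ℝ] ℝ) (hls : ls ∈ Λ)
    (c₀ : ℝ) (hc₀ : 0 < c₀)
    (hbdd : ∃ m : ℝ, ∀ x ∈ A, (m : EReal) ≤ L x ls c₀)
    (fstar : EReal) (hfstar : fstar = ⨅ x ∈ {z ∈ A | G z ∈ K}, f x) :
    (∃ c₁ > (0:ℝ), Bornology.IsBounded {x ∈ A | L x ls c₁ < fstar}) ↔
      (∃ c₂ > (0:ℝ), ∃ α > (0:ℝ),
        Bornology.IsBounded {x ∈ A | L x ls c₂ < fstar ∧ Metric.infDist (G x) K < α}) := by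
  obtain ⟨x₀, hx₀A, hx₀K, hx₀f⟩ := hfeas
  have hfs_lt_top : fstar < ⊤ := by
    rw [hfstar]
    exact lt_of_le_of_lt (iInf₂_le x₀ ⟨hx₀A, hx₀K⟩) hx₀f
  obtain ⟨m, hm⟩ := hbdd
  by_cases hbot : fstar = ⊥
  · have he : ∀ c, {x ∈ A | L x ls c < fstar} = ∅ := by
      intro c
      apply Set.eq_empty_of_forall_notMem
      intro x hx
      exact absurd (hbot ▸ hx.2) (not_lt_bot)
    constructor
    · intro _
      refine ⟨1, one_pos, 1, one_pos, ?_⟩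
      have : {x ∈ A | L x ls 1 < fstar ∧ Metric.infDist (G x) K < 1} ⊆
          {x ∈ A | L x ls 1 < fstar} := fun x hx => ⟨hx.1, hx.2.1⟩
      exact (Bornology.IsBounded.subset (by rw [he]; exact Bornology.isBounded_empty) this)
    · intro _
      exact ⟨1, one_pos, by rw [he]; exact Bornology.isBounded_empty⟩
  · lift fstar to ℝ using ⟨hfs_lt_top.ne, hbot⟩ with F hFdef
    constructor
    · rintro ⟨c₁, hc₁, hb⟩
      exact ⟨c₁, hc₁, 1, one_pos, hb.subset (fun x hx => ⟨hx.1, hx.2.1⟩)⟩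
    · rintro ⟨c₂, hc₂, α, hα, hb⟩
      obtain ⟨C, hC⟩ := hA7 ls hls c₀ hc₀ α hα (F - m + 1)
      set c₁ := max (max C c₂) c₀ with hc₁def
      have hc₁pos : 0 < c₁ := lt_of_lt_of_le hc₀ (le_max_right _ _)
      refine ⟨c₁, hc₁pos, hb.subset ?_⟩
      rintro x ⟨hxA, hxL⟩
      have hmono : L x ls c₂ ≤ L x ls c₁ := by
        rw [hL, hL]
        exact add_le_add_right (hA4 (G x) ls c₂ c₁ hc₂ (le_trans (le_max_right C c₂) (le_max_left _ _))) _
      refine ⟨hxA, lt_of_le_of_lt hmono hxL, ?_⟩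
      by_contra hd
      push_neg at hd
      have hmx : (m : EReal) ≤ f x + Φ (G x) ls c₀ := by rw [← hL]; exact hm x hxA
      have hΦ₀bot : Φ (G x) ls c₀ ≠ ⊥ := by
        intro h; rw [h, EReal.add_bot] at hmx; exact absurd hmx (by simp)
      have hfbot : f x ≠ ⊥ := by
        intro h; rw [h, EReal.bot_add] at hmx; exact absurd hmx (by simp)
      have hΦ₀₁ : Φ (G x) ls c₀ ≤ Φ (G x) ls c₁ := hA4 (G x) ls c₀ c₁ hc₀ (le_max_right _ _)
      by_cases hΦ₀top : Φ (G x) ls c₀ = ⊤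
      · have h1 : Φ (G x) ls c₁ = ⊤ := top_le_iff.mp (hΦ₀top ▸ hΦ₀₁)
        have h2 : L x ls c₁ = ⊤ := by
          rw [hL, h1]
          exact EReal.add_top_of_ne_bot hfbot
        rw [h2] at hxL
        exact absurd hxL (by simp)
      · have hsub := hC c₁ (le_trans (le_max_left C c₂) (le_max_left _ _)) (G x) hd
          (lt_top_iff_ne_top.mpr hΦ₀top)
        obtain ⟨a, ha⟩ : ∃ a : ℝ, Φ (G x) ls c₀ = (a : EReal) := by
          lift Φ (G x) ls c₀ to ℝ using ⟨hΦ₀top, hΦ₀bot⟩ with a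
          exact ⟨a, rfl⟩
        have hΦ₁bot : Φ (G x) ls c₁ ≠ ⊥ := by
          intro h; rw [ha, h] at hΦ₀₁; exact absurd hΦ₀₁ (by simp)
        by_cases hΦ₁top : Φ (G x) ls c₁ = ⊤
        · have h2 : L x ls c₁ = ⊤ := by
            rw [hL, hΦ₁top]
            exact EReal.add_top_of_ne_bot hfbot
          rw [h2] at hxL
          exact absurd hxL (by simp)
        · obtain ⟨b, hbb⟩ : ∃ b : ℝ, Φ (G x) ls c₁ = (b : EReal) := by
            lift Φ (G x) ls c₁ to ℝ using ⟨hΦ₁top, hΦ₁bot⟩ with b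
            exact ⟨b, rfl⟩
          by_cases hftop : f x = ⊤
          · have h2 : L x ls c₁ = ⊤ := by
              rw [hL, hftop, hbb]
              exact EReal.top_add_of_ne_bot (by simp)
            rw [h2] at hxL
            exact absurd hxL (by simp)
          · obtain ⟨t, ht⟩ : ∃ t : ℝ, f x = (t : EReal) := by
              lift f x to ℝ using ⟨hftop, hfbot⟩ with t
              exact ⟨t, rfl⟩
            rw [ha, hbb] at hsub
            rw [← EReal.coe_sub] at hsub
            have h3 : F - m + 1 ≤ b - a := by exact_mod_cast hsub
            rw [ht, ha, ← EReal.coe_add] at hmx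
            have h4 : m ≤ t + a := by exact_mod_cast hmx
            rw [hL, ht, hbb, ← EReal.coe_add] at hxL
            have h5 : t + b < F := by exact_mod_cast hxL
            linarith
end

section
/- Consider the two-constraint problem min f(x) s.t. g₁(x) ≤ 0, g₂(x) ≤ 0 over x ∈ ℝ² with f(x₁,x₂) = x₁² + x₂², g₁(x₁,x₂) = x₁ + x₂ + 2, g₂(x₁,x₂) = ½(x₁+2)² + ½(x₂+2)² − 1, and the exponential penalty augmented Lagrangian L(x,λ,c) = f(x) + (λ₁/c)(e^{c g₁(x)} − 1) + (λ₂/c)(e^{c g₂(x)} − 1). Then the pair x* = (−1,−1), λ* = (−1, 3) is a global saddle point of L: for all c > 0, sup_{λ∈ℝ²} L(x*,λ,c) = L(x*,λ*,c) = 2 and L(x,λ*,c) ≥ 2 for all x ∈ ℝ², even though λ* ∉ ℝ²₊. -/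
theorem stmt18
    (f : ℝ × ℝ → ℝ) (hf : ∀ x : ℝ × ℝ, f x = x.1 ^ 2 + x.2 ^ 2)
    (g₁ : ℝ × ℝ → ℝ) (hg₁ : ∀ x : ℝ × ℝ, g₁ x = x.1 + x.2 + 2)
    (g₂ : ℝ × ℝ → ℝ)
    (hg₂ : ∀ x : ℝ × ℝ, g₂ x = (x.1 + 2) ^ 2 / 2 + (x.2 + 2) ^ 2 / 2 - 1)
    (L : ℝ × ℝ → ℝ × ℝ → ℝ → ℝ)
    (hLdef : ∀ (x lam : ℝ × ℝ) (c : ℝ), L x lam c =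
      f x + lam.1 / c * (Real.exp (c * g₁ x) - 1) +
        lam.2 / c * (Real.exp (c * g₂ x) - 1)) :
    (∀ c : ℝ, 0 < c →
      (∀ lam : ℝ × ℝ, L (-1, -1) lam c ≤ L (-1, -1) (-1, 3) c) ∧
      L (-1, -1) (-1, 3) c = 2 ∧
      (∀ x : ℝ × ℝ, 2 ≤ L x (-1, 3) c)) ∧
    ((-1 : ℝ), (3 : ℝ)) ∉ {y : ℝ × ℝ | 0 ≤ y.1 ∧ 0 ≤ y.2} := by
  have hg₁0 : g₁ (-1, -1) = 0 := by rw [hg₁]; norm_num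
  have hg₂0 : g₂ (-1, -1) = 0 := by rw [hg₂]; norm_num
  have hstar : ∀ (lam : ℝ × ℝ) (c : ℝ), L (-1, -1) lam c = 2 := by
    intro lam c
    rw [hLdef, hf, hg₁0, hg₂0]
    simp; norm_num
  refine ⟨fun c hc => ⟨fun lam => by rw [hstar, hstar], hstar _ _, ?_⟩, by norm_num⟩
  intro x
  rw [hLdef]
  have h12 : g₁ x ≤ g₂ x := by
    rw [hg₁, hg₂]; nlinarith [sq_nonneg (x.1 + 1), sq_nonneg (x.2 + 1)]
  have hexp : Real.exp (c * g₁ x) ≤ Real.exp (c * g₂ x) :=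
    Real.exp_le_exp.mpr (by nlinarith)
  have hlin : c * g₂ x + 1 ≤ Real.exp (c * g₂ x) := Real.add_one_le_exp _
  have hfg : f x + 2 * g₂ x ≥ 2 := by
    rw [hf, hg₂]; nlinarith [sq_nonneg (x.1 + 1), sq_nonneg (x.2 + 1)]
  have key : (2 : ℝ) / c * (Real.exp (c * g₂ x) - 1) ≥ 2 * g₂ x := by
    rw [ge_iff_le, div_mul_eq_mul_div, le_div_iff₀ hc]
    nlinarith
  simp only
  have hcneg : (-1 : ℝ) / c ≤ 0 := by
    apply div_nonpos_of_nonpos_of_nonneg <;> linarith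
  have h1 : (-1 : ℝ) / c * (Real.exp (c * g₁ x) - 1) ≥
      (-1 : ℝ) / c * (Real.exp (c * g₂ x) - 1) :=
    mul_le_mul_of_nonpos_left (by linarith) hcneg
  have h2 : (-1 : ℝ) / c * (Real.exp (c * g₂ x) - 1) +
      3 / c * (Real.exp (c * g₂ x) - 1) = 2 / c * (Real.exp (c * g₂ x) - 1) := by ring
  linarith [h1, h2, key, hfg]
end

section
/- (Key step of the exactness theorem for the Hestenes–Powell–Rockafellar penalized augmented Lagrangian.) With p(x,λ) = a(x)/(1 + Σᵢ λᵢ²) and q(x,λ) = b(x)/(1 + Σⱼ λⱼ²) where a(x), b(x) ≤ α, the penalized augmented Lagrangian L_e(x,λ,c) defined in (the inequality-equality HPR form) satisfies the lower estimate L_e(x,λ,c) ≥ f(x) − α/c + η₁(x,λ) for all x with a(x) > 0, b(x) > 0, all λ ∈ ℝ^{l+s}, and all c > 0. Consequently, for any γ > 0 and any c > α/γ, every (x,λ) with L_e(x,λ,c) < f* satisfies f(x) < f* + γ, a(x) > 0, b(x) > 0. -/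
lemma quad_lb (lam t P c : ℝ) (hP : 0 < P) (hc : 0 < c) :
    -(P / (2 * c)) * lam ^ 2 ≤ lam * t + c / (2 * P) * t ^ 2 := by
  have h1 : lam * t + c / (2 * P) * t ^ 2 + P / (2 * c) * lam ^ 2
      = (c * t + P * lam) ^ 2 / (2 * P * c) := by field_simp; ring
  have h2 : (0:ℝ) ≤ (c * t + P * lam) ^ 2 / (2 * P * c) := by positivity
  linarith

theorem stmt19 {d l s : ℕ}
    (f : (Fin d → ℝ) → ℝ)
    (gI : Fin l → (Fin d → ℝ) → ℝ) (gJ : Fin s → (Fin d → ℝ) → ℝ)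
    (η₁ : (Fin d → ℝ) → (Fin l → ℝ) → (Fin s → ℝ) → ℝ)
    (hη : ∀ x lam mu, 0 ≤ η₁ x lam mu)
    (α κ : ℝ) (hα : 0 < α) (hκ : 2 < κ)
    (a b : (Fin d → ℝ) → ℝ)
    (ha : ∀ x, a x = α - ∑ i, max 0 (gI i x) ^ κ)
    (hb : ∀ x, b x = α - ∑ j, (gJ j x) ^ 2)
    (p q : (Fin d → ℝ) → (Fin l → ℝ) → (Fin s → ℝ) → ℝ)
    (hp : ∀ x lam mu, p x lam mu = a x / (1 + ∑ i, (lam i) ^ 2))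
    (hq : ∀ x lam mu, q x lam mu = b x / (1 + ∑ j, (mu j) ^ 2))
    (Le : (Fin d → ℝ) → (Fin l → ℝ) → (Fin s → ℝ) → ℝ → ℝ)
    (hLe : ∀ x lam mu c, Le x lam mu c =
      f x + (∑ i, (lam i * max (gI i x) (-(p x lam mu / c) * lam i)
        + c / (2 * p x lam mu) * (max (gI i x) (-(p x lam mu / c) * lam i)) ^ 2))
      + (∑ j, (mu j * gJ j x + c / (2 * q x lam mu) * (gJ j x) ^ 2))
      + η₁ x lam mu)
    (LeE : (Fin d → ℝ) → (Fin l → ℝ) → (Fin s → ℝ) → ℝ → EReal)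
    (hLeE : ∀ x lam mu c, LeE x lam mu c =
      if 0 < a x ∧ 0 < b x then ((Le x lam mu c : ℝ) : EReal) else ⊤)
    (fstar : ℝ)
    (hfstar : fstar = sInf (f '' {x | (∀ i, gI i x ≤ 0) ∧ ∀ j, gJ j x = 0})) :
    (∀ x lam mu, 0 < a x → 0 < b x → ∀ c : ℝ, 0 < c →
      f x - α / c + η₁ x lam mu ≤ Le x lam mu c) ∧
    (∀ γ : ℝ, 0 < γ → ∀ c : ℝ, α / γ < c → ∀ x lam mu,
      LeE x lam mu c < (fstar : EReal) →
      f x < fstar + γ ∧ 0 < a x ∧ 0 < b x) := by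
  have key : ∀ x lam mu, 0 < a x → 0 < b x → ∀ c : ℝ, 0 < c →
      f x - α / c + η₁ x lam mu ≤ Le x lam mu c := by
    intro x lam mu hax hbx c hc
    have haα : a x ≤ α := by
      rw [ha]
      have : (0:ℝ) ≤ ∑ i, max 0 (gI i x) ^ κ :=
        Finset.sum_nonneg fun i _ => Real.rpow_nonneg (le_max_left _ _) _
      linarith
    have hbα : b x ≤ α := by
      rw [hb]
      have : (0:ℝ) ≤ ∑ j, (gJ j x) ^ 2 :=
        Finset.sum_nonneg fun j _ => sq_nonneg _
      linarith
    set T := ∑ i, (lam i) ^ 2 with hT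
    set U := ∑ j, (mu j) ^ 2 with hU
    have hT0 : 0 ≤ T := Finset.sum_nonneg fun i _ => sq_nonneg _
    have hU0 : 0 ≤ U := Finset.sum_nonneg fun j _ => sq_nonneg _
    have hT1 : (0:ℝ) < 1 + T := by linarith
    have hU1 : (0:ℝ) < 1 + U := by linarith
    have hpP : 0 < p x lam mu := by rw [hp]; positivity
    have hqP : 0 < q x lam mu := by rw [hq]; positivity
    -- bound inequality sum
    have hsumI : -(α / (2 * c)) ≤
        ∑ i, (lam i * max (gI i x) (-(p x lam mu / c) * lam i)
          + c / (2 * p x lam mu) * (max (gI i x) (-(p x lam mu / c) * lam i)) ^ 2) := by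
      have step := Finset.sum_le_sum (s := Finset.univ)
        (f := fun i => -(p x lam mu / (2 * c)) * (lam i) ^ 2)
        (g := fun i => lam i * max (gI i x) (-(p x lam mu / c) * lam i)
          + c / (2 * p x lam mu) * (max (gI i x) (-(p x lam mu / c) * lam i)) ^ 2)
        (fun i _ => quad_lb (lam i) _ (p x lam mu) c hpP hc)
      refine le_trans ?_ step
      rw [← Finset.mul_sum, ← hT]
      have hpT : p x lam mu * T ≤ α := by
        rw [hp, ← hT, div_mul_eq_mul_div, div_le_iff₀ hT1]
        nlinarith
      rw [neg_mul, neg_le_neg_iff, div_mul_eq_mul_div, div_le_div_iff₀ (by positivity) (by positivity)]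
      nlinarith
    have hsumJ : -(α / (2 * c)) ≤
        ∑ j, (mu j * gJ j x + c / (2 * q x lam mu) * (gJ j x) ^ 2) := by
      have step := Finset.sum_le_sum (s := Finset.univ)
        (f := fun j => -(q x lam mu / (2 * c)) * (mu j) ^ 2)
        (g := fun j => mu j * gJ j x + c / (2 * q x lam mu) * (gJ j x) ^ 2)
        (fun j _ => quad_lb (mu j) (gJ j x) (q x lam mu) c hqP hc)
      refine le_trans ?_ step
      rw [← Finset.mul_sum, ← hU]
      have hqU : q x lam mu * U ≤ α := by
        rw [hq, ← hU, div_mul_eq_mul_div, div_le_iff₀ hU1]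
        nlinarith
      rw [neg_mul, neg_le_neg_iff, div_mul_eq_mul_div, div_le_div_iff₀ (by positivity) (by positivity)]
      nlinarith
    rw [hLe]
    have : α / c = α / (2 * c) + α / (2 * c) := by ring
    linarith
  refine ⟨key, ?_⟩
  intro γ hγ c hcγ x lam mu hlt
  have hc : 0 < c := lt_of_le_of_lt (by positivity) hcγ
  have hab : 0 < a x ∧ 0 < b x := by
    by_contra h
    rw [hLeE, if_neg h] at hlt
    exact (not_lt.2 le_top) hlt
  rw [hLeE, if_pos hab] at hlt
  have hlt' : Le x lam mu c < fstar := by exact_mod_cast hlt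
  have h1 := key x lam mu hab.1 hab.2 c hc
  have hαc : α / c < γ := by
    rw [div_lt_iff₀ hc]
    rw [div_lt_iff₀ hγ] at hcγ
    nlinarith
  have := hη x lam mu
  exact ⟨by linarith, hab⟩
end
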